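/- Under the hypotheses of the magnitude rank-one update (Z positive definite, Z[ζ] = [[Z,ζ],[ζᵀ,1]] positive definite, w = Z⁻¹1), the differential magnitude Mag(Z[ζ]) − Mag(Z) = (1 − ζᵀw)²/(1 − ζᵀZ⁻¹ζ) is nonnegative. Hence adjoining a point never decreases magnitude. -/

import Mathlib

open Matrix

/-- Magnitude of an invertible matrix: the sum of the entries of its inverse. -/
noncomputable def Mag {m : Type*} [Fintype m] [DecidableEq m]
    (M : Matrix m m ℝ) : ℝ := ∑ i, ∑ j, M⁻¹ i j

/-- The bordered matrix `Z[ζ] = [[Z, ζ], [ζᵀ, 1]]`. -/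
noncomputable def border {n : ℕ} (Z : Matrix (Fin n) (Fin n) ℝ) (ζ : Fin n → ℝ) :
    Matrix (Fin n ⊕ Unit) (Fin n ⊕ Unit) ℝ :=
  Matrix.fromBlocks Z (Matrix.of fun i _ => ζ i) (Matrix.of fun _ j => ζ j)
    (Matrix.of fun _ _ => (1 : ℝ))

theorem stmt13 {n : ℕ} (Z : Matrix (Fin n) (Fin n) ℝ) (ζ : Fin n → ℝ)
    (hZ : Z.PosDef) (hB : (border Z ζ).PosDef) :
    Mag (border Z ζ) - Mag Z =
        (1 - ζ ⬝ᵥ (Z⁻¹ *ᵥ fun _ => 1)) ^ 2 / (1 - ζ ⬝ᵥ (Z⁻¹ *ᵥ ζ)) ∧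
      Mag Z ≤ Mag (border Z ζ) := by
  letI := hZ.isUnit.invertible
  set B : Matrix (Fin n) Unit ℝ := Matrix.of fun i _ => ζ i with hBdef
  set D : Matrix Unit Unit ℝ := Matrix.of fun _ _ => (1:ℝ) with hDdef
  set S : Matrix Unit Unit ℝ := Matrix.of fun _ _ => (1 - ζ ⬝ᵥ (Z⁻¹ *ᵥ ζ))⁻¹ with hSdef
  have hbd : border Z ζ = fromBlocks Z B Bᴴ D := by
    unfold border; congr 1
  set s : ℝ := 1 - ζ ⬝ᵥ (Z⁻¹ *ᵥ ζ) with hsdef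
  have hsym : Z⁻¹ᵀ = Z⁻¹ := hZ.1.inv.eq
  have hsym' : ∀ i j, Z⁻¹ i j = Z⁻¹ j i := fun i j =>
    (congrFun (congrFun hsym i) j).symm
  have hSc : D - Bᴴ * Z⁻¹ * B = Matrix.of fun _ _ => s := by
    ext u v
    simp [hBdef, hDdef, hsdef, Matrix.mul_apply, dotProduct, mulVec, Finset.mul_sum,
      Finset.sum_mul]
    rw [Finset.sum_comm]
    apply Finset.sum_congr rfl; intro i _
    apply Finset.sum_congr rfl; intro j _
    ring
  -- positivity of s
  have hs : 0 < s := by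
    have key := schur_complement_eq₁₁ (A := Z) B D
      (-((Z⁻¹ * B) *ᵥ fun _ => 1)) (fun _ => 1) hZ.1
    rw [neg_add_cancel] at key
    set v : Fin n ⊕ Unit → ℝ := (-((Z⁻¹ * B) *ᵥ fun _ => 1) ⊕ᵥ fun _ => (1:ℝ)) with hvdef
    have hv : v ≠ 0 := by
      intro h
      have := congrFun h (Sum.inr ())
      simp [hvdef] at this
    have hpos := hB.dotProduct_mulVec_pos hv
    rw [hbd, show star v = v from rfl, dotProduct_mulVec] at hpos
    rw [show star v = v from rfl] at key
    rw [key, hSc] at hpos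
    simpa [vecMul, dotProduct] using hpos
  have hZinv : ⅟Z = Z⁻¹ := invOf_eq_nonsing_inv Z
  have hSc' : D - Bᴴ * ⅟Z * B = Matrix.of fun _ _ => s := by rw [hZinv]; exact hSc
  have hSmul : (Matrix.of fun _ _ => s : Matrix Unit Unit ℝ) * S = 1 := by
    ext u w
    simp [hSdef, Matrix.mul_apply, Matrix.one_apply, mul_inv_cancel₀ hs.ne']
  letI iS : Invertible (D - Bᴴ * ⅟Z * B) := by
    refine invertibleOfRightInverse _ S ?_
    rw [hSc']; exact hSmul
  letI iM : Invertible (fromBlocks Z B Bᴴ D) := fromBlocks₁₁Invertible Z B Bᴴ D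
  have hiS : ⅟ (D - Bᴴ * ⅟Z * B) = S := by
    apply invOf_eq_right_inv
    rw [hSc']; exact hSmul
  have hinvM : (fromBlocks Z B Bᴴ D)⁻¹ =
      fromBlocks (Z⁻¹ + Z⁻¹ * B * S * Bᴴ * Z⁻¹) (-(Z⁻¹ * B * S)) (-(S * Bᴴ * Z⁻¹)) S := by
    rw [← invOf_eq_nonsing_inv, invOf_fromBlocks₁₁_eq Z B Bᴴ D, hiS, hZinv]
  -- the key sums
  set u : Fin n → ℝ := Z⁻¹ *ᵥ ζ with hudef
  set c : ℝ := ∑ i, u i with hcdef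
  have hc : ζ ⬝ᵥ (Z⁻¹ *ᵥ fun _ => 1) = c := by
    simp only [hcdef, hudef, dotProduct, mulVec, dotProduct, Finset.mul_sum]
    rw [Finset.sum_comm]
    apply Finset.sum_congr rfl; intro i _
    apply Finset.sum_congr rfl; intro j _
    rw [hsym' j i]; ring
  have ht : ∀ j, (ζ ᵥ* Z⁻¹) j = u j := by
    intro j
    have : ζ ᵥ* Z⁻¹ᵀ = Z⁻¹ *ᵥ ζ := Matrix.vecMul_transpose Z⁻¹ ζ
    rw [hsym] at this
    rw [this]
  have hBZ : ∀ j, (Bᴴ * Z⁻¹) () j = u j := by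
    intro j
    rw [← ht j]
    simp [hBdef, Matrix.mul_apply, vecMul, dotProduct]
  have hZB : ∀ i, (Z⁻¹ * B) i () = u i := by
    intro i
    simp [hBdef, hudef, Matrix.mul_apply, mulVec, dotProduct]
  have eT : S () () = s⁻¹ := rfl
  have h2 : ∀ i, (Z⁻¹ * B * S) i () = u i * s⁻¹ := by
    intro i
    rw [Matrix.mul_apply, Fintype.sum_unique, hZB i, eT]
  have h3 : ∀ j, (S * Bᴴ * Z⁻¹) () j = s⁻¹ * u j := by
    intro j
    rw [Matrix.mul_assoc, Matrix.mul_apply, Fintype.sum_unique, hBZ j, eT]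
  have h1 : ∀ i j, (Z⁻¹ * B * S * Bᴴ * Z⁻¹) i j = u i * s⁻¹ * u j := by
    intro i j
    rw [Matrix.mul_assoc (Z⁻¹ * B * S) Bᴴ Z⁻¹, Matrix.mul_apply, Fintype.sum_unique,
      h2 i, hBZ j]
  -- compute Mag of the border
  have hMagB : Mag (border Z ζ) = Mag Z + (c * s⁻¹ * c - c * s⁻¹ - s⁻¹ * c + s⁻¹) := by
    rw [Mag, hbd, hinvM]
    rw [show ∀ (P : Matrix (Fin n) (Fin n) ℝ) (Q : Matrix (Fin n) Unit ℝ)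
        (R : Matrix Unit (Fin n) ℝ) (T : Matrix Unit Unit ℝ),
        ∑ p, ∑ q, (fromBlocks P Q R T) p q
          = (∑ i, ∑ j, P i j) + (∑ i, Q i ()) + ((∑ j, R () j) + T () ()) from
      fun P Q R T => by simp [Fintype.sum_sum_type, Finset.sum_add_distrib]; ring]
    have eP : ∑ i, ∑ j, (Z⁻¹ + Z⁻¹ * B * S * Bᴴ * Z⁻¹) i j = Mag Z + c * s⁻¹ * c := by
      simp only [Matrix.add_apply, h1, Finset.sum_add_distrib]
      congr 1
      rw [hcdef, Finset.sum_mul, Finset.sum_mul]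
      apply Finset.sum_congr rfl; intro i _
      rw [Finset.mul_sum]
    have eQ : ∑ i, (-(Z⁻¹ * B * S)) i () = -(c * s⁻¹) := by
      simp only [Matrix.neg_apply, h2]
      rw [hcdef, Finset.sum_mul]
      simp
    have eR : ∑ j, (-(S * Bᴴ * Z⁻¹)) () j = -(s⁻¹ * c) := by
      simp only [Matrix.neg_apply, h3]
      rw [hcdef, Finset.mul_sum]
      simp
    rw [eP, eQ, eR, eT]
    ring
  rw [hMagB, hc]
  constructor
  · field_simp
    ring
  · have : 0 ≤ (1 - c) ^ 2 / s := div_nonneg (sq_nonneg _) hs.le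
    have h4 : c * s⁻¹ * c - c * s⁻¹ - s⁻¹ * c + s⁻¹ = (1 - c) ^ 2 / s := by
      field_simp
      ring
    nlinarith [this]
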